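/- Let G be a connected k-uniform hypergraph on {1,…,n} with at least one edge, and let x ∈ ℂ^n be a nonzero vector satisfying ((D−A) x^{k−1})_i = 0 for all i (i.e., x is an eigenvector of the Laplacian tensor associated with the eigenvalue zero). Then x_i ≠ 0 for every i ∈ {1,…,n}, and x_i^k = x_j^k for all i, j; consequently all components of x have the same modulus and every ratio x_i/x_j is a k-th root of unity. -/

import Mathlib

open Finset

/-- Degree of vertex `i` in the hypergraph with edge set `E`. -/
def hdeg {n : ℕ} (E : Finset (Finset (Fin n))) (i : Fin n) : ℕ :=
  (E.filter fun e => i ∈ e).card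

/-- Laplacian tensor action `((D - A) x^{k-1})_i` over ℂ. -/
noncomputable def lapC (k : ℕ) {n : ℕ} (E : Finset (Finset (Fin n)))
    (x : Fin n → ℂ) (i : Fin n) : ℂ :=
  (hdeg E i : ℂ) * x i ^ (k - 1) -
    ∑ e ∈ E.filter (fun e => i ∈ e), ∏ j ∈ e.erase i, x j

/-- Signless Laplacian tensor action `((D + A) x^{k-1})_i` over ℂ. -/
noncomputable def slapC (k : ℕ) {n : ℕ} (E : Finset (Finset (Fin n)))
    (x : Fin n → ℂ) (i : Fin n) : ℂ :=
  (hdeg E i : ℂ) * x i ^ (k - 1) +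
    ∑ e ∈ E.filter (fun e => i ∈ e), ∏ j ∈ e.erase i, x j

/-- Laplacian tensor action `((D - A) x^{k-1})_i` over ℝ. -/
noncomputable def lapR (k : ℕ) {n : ℕ} (E : Finset (Finset (Fin n)))
    (x : Fin n → ℝ) (i : Fin n) : ℝ :=
  (hdeg E i : ℝ) * x i ^ (k - 1) -
    ∑ e ∈ E.filter (fun e => i ∈ e), ∏ j ∈ e.erase i, x j

/-- Signless Laplacian tensor action `((D + A) x^{k-1})_i` over ℝ. -/
noncomputable def slapR (k : ℕ) {n : ℕ} (E : Finset (Finset (Fin n)))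
    (x : Fin n → ℝ) (i : Fin n) : ℝ :=
  (hdeg E i : ℝ) * x i ^ (k - 1) +
    ∑ e ∈ E.filter (fun e => i ∈ e), ∏ j ∈ e.erase i, x j

/-- The hypergraph with edge set `E` is connected: every pair of distinct vertices is
joined by a chain of edges with consecutive edges intersecting. -/
def HConnected {n : ℕ} (E : Finset (Finset (Fin n))) : Prop :=
  ∀ i j : Fin n, i ≠ j → ∃ m : ℕ, ∃ es : Fin (m + 1) → Finset (Fin n),
    (∀ r, es r ∈ E) ∧ i ∈ es 0 ∧ j ∈ es (Fin.last m) ∧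
    ∀ r : Fin m, (es r.castSucc ∩ es r.succ).Nonempty

lemma sum_rigid {α : Type*} {s : Finset α} {z : α → ℂ} {w : ℂ}
    (hle : ∀ a ∈ s, ‖z a‖ ≤ ‖w‖)
    (hsum : ∑ a ∈ s, z a = (s.card : ℂ) * w) :
    ∀ a ∈ s, z a = w := by
  by_cases hw : w = 0
  · intro a ha
    have := hle a ha
    rw [hw] at this ⊢
    simpa using norm_eq_zero.mp (le_antisymm (by simpa using this) (norm_nonneg _))
  · set cw := (starRingEnd ℂ) w with hcw
    have hns : ‖w‖ * ‖w‖ = Complex.normSq w := by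
      rw [← Complex.sq_norm]; ring
    have key : ∀ a ∈ s, (z a * cw).re = Complex.normSq w := by
      have h1 : ∀ a ∈ s, (z a * cw).re ≤ Complex.normSq w := by
        intro a ha
        calc (z a * cw).re ≤ ‖z a * cw‖ := Complex.re_le_norm _
          _ = ‖z a‖ * ‖w‖ := by rw [norm_mul, Complex.norm_conj]
          _ ≤ ‖w‖ * ‖w‖ :=
              mul_le_mul_of_nonneg_right (hle a ha) (norm_nonneg _)
          _ = Complex.normSq w := hns
      have h2 : ∑ a ∈ s, (z a * cw).re = ∑ a ∈ s, Complex.normSq w := by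
        have h3 : (∑ a ∈ s, z a * cw) = (s.card : ℂ) * (Complex.normSq w : ℝ) := by
          rw [← Finset.sum_mul, hsum, mul_assoc, hcw, Complex.mul_conj]
        have := congrArg Complex.re h3
        rw [Complex.re_sum] at this
        rw [this]
        simp [Finset.sum_const, nsmul_eq_mul]
      exact fun a ha => ((Finset.sum_eq_sum_iff_of_le h1).mp h2) a ha
    intro a ha
    have habs : ‖z a * cw‖ ≤ Complex.normSq w := by
      rw [norm_mul, Complex.norm_conj, ← hns]
      exact mul_le_mul_of_nonneg_right (hle a ha) (norm_nonneg _)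
    have hre := key a ha
    set u := z a * cw with hu
    have habsre : ‖u‖ = u.re :=
      le_antisymm (by rw [hre]; exact habs) (Complex.re_le_norm u)
    have him : u.im = 0 := by
      have h4 := Complex.sq_norm u
      rw [habsre, Complex.normSq_apply] at h4
      nlinarith [h4]
    have huw : u = (Complex.normSq w : ℝ) := by
      apply Complex.ext
      · simpa using hre
      · simpa using him
    have : z a * cw = w * cw := by rw [← hu, huw, hcw, Complex.mul_conj]
    exact mul_right_cancel₀ (by simpa [hcw] using hw) this


lemma propagate {n : ℕ} {E : Finset (Finset (Fin n))} (hconn : HConnected E)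
    (P : Fin n → Prop)
    (hedge : ∀ e ∈ E, ∀ i ∈ e, P i → ∀ j ∈ e, P j)
    {i0 : Fin n} (h0 : P i0) : ∀ j, P j := by
  intro j
  by_cases hij : j = i0
  · rwa [hij]
  obtain ⟨m, es, hes, hi, hj, hint⟩ := hconn i0 j (Ne.symm hij)
  suffices h : ∀ r : ℕ, ∀ hr : r < m + 1, ∀ v ∈ es ⟨r, hr⟩, P v by
    exact h m (Nat.lt_succ_self m) j (by simpa [Fin.last] using hj)
  intro r
  induction r with
  | zero =>
    intro hr v hv
    exact hedge (es 0) (hes 0) i0 (by simpa using hi) h0 v (by simpa using hv)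
  | succ r ih =>
    intro hr v hv
    have hrm : r < m := Nat.lt_of_succ_lt_succ hr
    obtain ⟨w, hw⟩ := hint ⟨r, hrm⟩
    rw [Finset.mem_inter] at hw
    have hw1 : w ∈ es ⟨r, Nat.lt_of_lt_of_le hrm (Nat.le_succ m)⟩ := by
      have h5 : (⟨r, hrm⟩ : Fin m).castSucc = ⟨r, Nat.lt_of_lt_of_le hrm (Nat.le_succ m)⟩ := rfl
      rw [← h5]; exact hw.1
    have hw2 : w ∈ es ⟨r + 1, hr⟩ := by
      have h6 : (⟨r, hrm⟩ : Fin m).succ = ⟨r + 1, hr⟩ := rfl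
      rw [← h6]; exact hw.2
    have hPw : P w := ih _ w hw1
    exact hedge _ (hes _) w hw2 hPw v hv

section Tst
variable {n k : ℕ} (hk : 3 ≤ k) (hn : k ≤ n)
    (E : Finset (Finset (Fin n))) (hE : ∀ e ∈ E, e.card = k)
    (x : Fin n → ℂ) (heig : ∀ i, lapC k E x i = 0)
    (M : ℝ) (hmax : ∀ j, ‖x j‖ ≤ M) (hMpos : 0 < M)

include hk hE heig hmax in
lemma core : ∀ i, ‖x i‖ = M → ∀ e ∈ E, i ∈ e →
    ∏ j ∈ e, x j = x i ^ k := by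
  intro i hiM e heE hie
  set F := E.filter (fun e => i ∈ e) with hF
  have heq : ∑ e' ∈ F, ∏ j ∈ e'.erase i, x j = (hdeg E i : ℂ) * x i ^ (k - 1) := by
    have := heig i
    unfold lapC at this
    linear_combination -this
  have hk1 : k - 1 + 1 = k := by omega
  have hsum : ∑ e' ∈ F, ∏ j ∈ e', x j = (F.card : ℂ) * x i ^ k := by
    have h1 : ∀ e' ∈ F, ∏ j ∈ e', x j = x i * ∏ j ∈ e'.erase i, x j := by
      intro e' he'
      exact (Finset.mul_prod_erase e' x (Finset.mem_filter.mp he').2).symm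
    rw [Finset.sum_congr rfl h1, ← Finset.mul_sum, heq]
    have : (F.card : ℂ) = (hdeg E i : ℂ) := by rw [hF]; rfl
    rw [this]
    have hp : x i ^ (k - 1 + 1) = x i ^ (k-1) * x i := pow_succ _ _
    rw [hk1] at hp
    rw [hp]; ring
  have hle : ∀ e' ∈ F, ‖∏ j ∈ e', x j‖ ≤ ‖x i ^ k‖ := by
    intro e' he'
    rw [norm_prod, norm_pow, hiM]
    calc ∏ j ∈ e', ‖x j‖ ≤ ∏ _j ∈ e', M :=
          Finset.prod_le_prod (fun j _ => norm_nonneg _) (fun j _ => hmax j)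
      _ = M ^ e'.card := Finset.prod_const M
      _ = M ^ k := by rw [hE e' (Finset.mem_filter.mp he').1]
  exact sum_rigid hle hsum e (Finset.mem_filter.mpr ⟨heE, hie⟩)

include hk hE heig hmax hMpos in
lemma modstep : ∀ e ∈ E, ∀ i ∈ e, ‖x i‖ = M →
    ∀ j ∈ e, ‖x j‖ = M := by
  intro e heE i hie hiM j hje
  have hprod : ∏ j' ∈ e, ‖x j'‖ = M ^ k := by
    have := congrArg (‖·‖) (core hk E hE x heig M hmax i hiM e heE hie)
    rwa [norm_prod, norm_pow, hiM] at this
  have hMk : (0:ℝ) < M ^ k := pow_pos hMpos k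
  have hP : ∀ j' ∈ e, 0 < ‖x j'‖ := by
    intro j' hj'
    rcases (norm_nonneg (x j')).lt_or_eq with h | h
    · exact h
    · exfalso
      have : ∏ j' ∈ e, ‖x j'‖ = 0 :=
        Finset.prod_eq_zero hj' h.symm
      rw [hprod] at this; exact absurd this (ne_of_gt hMk)
  set P := ∏ j' ∈ e.erase j, ‖x j'‖ with hPdef
  have hPpos : 0 < P := Finset.prod_pos (fun j' hj' => hP j' (Finset.mem_of_mem_erase hj'))
  have hPle : P ≤ M ^ (k - 1) := by
    calc P ≤ ∏ _j' ∈ e.erase j, M :=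
          Finset.prod_le_prod (fun j' _ => norm_nonneg _) (fun j' _ => hmax j')
      _ = M ^ (e.erase j).card := Finset.prod_const M
      _ = M ^ (k - 1) := by rw [Finset.card_erase_of_mem hje, hE e heE]
  have hmul : ‖x j‖ * P = M ^ k := by
    rw [hPdef, ← hprod]
    exact Finset.mul_prod_erase e (fun j' => ‖x j'‖) hje
  have hMk' : M ^ k = M * M ^ (k - 1) := by
    conv_lhs => rw [show k = (k-1) + 1 by omega]
    rw [pow_succ]; ring
  have : M * P ≤ ‖x j‖ * P := by
    calc M * P ≤ M * M ^ (k - 1) := by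
          exact mul_le_mul_of_nonneg_left hPle (le_of_lt hMpos)
      _ = M ^ k := hMk'.symm
      _ = ‖x j‖ * P := hmul.symm
  have hMle : M ≤ ‖x j‖ := le_of_mul_le_mul_right this hPpos
  exact le_antisymm (hmax j) hMle

end Tst

theorem stmt_2 {n k : ℕ} (hk : 3 ≤ k) (hn : k ≤ n)
    (E : Finset (Finset (Fin n))) (hE : ∀ e ∈ E, e.card = k)
    (hconn : HConnected E) (hne : E.Nonempty)
    (x : Fin n → ℂ) (hx : x ≠ 0)
    (heig : ∀ i, lapC k E x i = 0) :
    (∀ i, x i ≠ 0) ∧ (∀ i j, x i ^ k = x j ^ k) ∧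
      (∀ i j, ‖x i‖ = ‖x j‖) ∧
      (∀ i j, (x i / x j) ^ k = 1) := by
  have hnpos : 0 < n := by omega
  obtain ⟨i0, -, hmax'⟩ := Finset.exists_max_image Finset.univ
    (fun i => ‖x i‖) ⟨⟨0, hnpos⟩, Finset.mem_univ _⟩
  set M := ‖x i0‖ with hM
  have hmax : ∀ j, ‖x j‖ ≤ M := fun j => hmax' j (Finset.mem_univ j)
  have hMpos : 0 < M := by
    obtain ⟨i1, hi1⟩ := Function.ne_iff.mp hx
    have h0 : 0 < ‖x i1‖ := norm_pos_iff.mpr (by simpa using hi1)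
    exact lt_of_lt_of_le h0 (hmax i1)
  have hallM : ∀ i, ‖x i‖ = M :=
    propagate hconn (fun i => ‖x i‖ = M)
      (fun e heE i hie hiM j hje =>
        modstep hk E hE x heig M hmax hMpos e heE i hie hiM j hje) rfl
  have hne0 : ∀ i, x i ≠ 0 := by
    intro i h
    have h1 := hallM i
    rw [h] at h1
    simp at h1
    exact absurd h1.symm (ne_of_gt hMpos)
  have hedgepow : ∀ e ∈ E, ∀ i ∈ e, ∀ j ∈ e, x i ^ k = x j ^ k := by
    intro e heE i hie j hje
    rw [← core hk E hE x heig M hmax i (hallM i) e heE hie,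
        ← core hk E hE x heig M hmax j (hallM j) e heE hje]
  have hpow : ∀ i j, x i ^ k = x j ^ k := by
    intro i j
    have h2 := propagate hconn (fun v => x v ^ k = x i ^ k)
      (fun e heE v hve hv j' hj'e => by
        show x j' ^ k = x i ^ k
        rw [hedgepow e heE j' hj'e v hve]; exact hv) rfl j
    exact h2.symm
  refine ⟨hne0, hpow, fun i j => (hallM i).trans (hallM j).symm, fun i j => ?_⟩
  rw [div_pow, hpow i j, div_self (pow_ne_zero k (hne0 j))]
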